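/- Every compact Hausdorff Collins-Roscoe space is monotonically Sokolov. -/

import Mathlib

open Set Cardinal

universe u

/-- `N` is an external network of `S` in `T`. -/
def IsExternalNetwork (T : Type u) [TopologicalSpace T] (N : Set (Set T)) (S : Set T) : Prop :=
  ∀ a ∈ S, ∀ U : Set T, IsOpen U → a ∈ U → ∃ P ∈ N, a ∈ P ∧ P ⊆ U

/-- `T` is monotonically Sokolov: to each countable family of closed sets one can assign
a continuous retraction keeping each member of the family invariant, together with a
countable external network of the image of the retraction, ω-monotonically. -/
def MonotonicallySokolov (T : Type u) [TopologicalSpace T] : Prop :=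
  ∃ (r : Set (Set T) → T → T) (N : Set (Set T) → Set (Set T)),
    (∀ F : Set (Set T), F.Countable → (∀ A ∈ F, IsClosed A) →
      Continuous (r F) ∧ (∀ x, r F (r F x) = r F x) ∧
      (∀ A ∈ F, ∀ x ∈ A, r F x ∈ A) ∧
      (N F).Countable ∧ IsExternalNetwork T (N F) (Set.range (r F))) ∧
    (∀ F G : Set (Set T), F.Countable → (∀ A ∈ F, IsClosed A) →
      G.Countable → (∀ A ∈ G, IsClosed A) → F ⊆ G → N F ⊆ N G) ∧
    (∀ s : ℕ → Set (Set T), (∀ n, (s n).Countable) → (∀ n, ∀ A ∈ s n, IsClosed A) →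
      (∀ n, s n ⊆ s (n + 1)) → N (⋃ n, s n) = ⋃ n, N (s n))

/-- `T` is monotonically ω-monolithic: to each countable set one can assign a countable
external network of its closure, ω-monotonically. -/
def MonotonicallyOmegaMonolithic (T : Type u) [TopologicalSpace T] : Prop :=
  ∃ O : Set T → Set (Set T),
    (∀ A : Set T, A.Countable → (O A).Countable ∧ IsExternalNetwork T (O A) (closure A)) ∧
    (∀ A B : Set T, A.Countable → B.Countable → A ⊆ B → O A ⊆ O B) ∧
    (∀ s : ℕ → Set T, (∀ n, (s n).Countable) → (∀ n, s n ⊆ s (n + 1)) →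
      O (⋃ n, s n) = ⋃ n, O (s n))

/-- `T` is monotonically `κ`-monolithic. -/
def MonotonicallyKappaMonolithic (T : Type u) [TopologicalSpace T] (κ : Cardinal.{u}) : Prop :=
  ∃ O : Set T → Set (Set T),
    (∀ A : Set T, #A ≤ κ →
      #(O A) ≤ #A + ℵ₀ ∧ IsExternalNetwork T (O A) (closure A)) ∧
    (∀ A B : Set T, #A ≤ κ → #B ≤ κ → A ⊆ B → O A ⊆ O B) ∧
    (∀ (ι : Type u) [LinearOrder ι], #ι ≤ κ →
      ∀ A : ι → Set T, Monotone A → (∀ i, #(A i) ≤ κ) →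
        O (⋃ i, A i) = ⋃ i, O (A i))

/-- `T` is monotonically monolithic: monotonically `κ`-monolithic for every infinite `κ`. -/
def MonotonicallyMonolithic (T : Type u) [TopologicalSpace T] : Prop :=
  ∀ κ : Cardinal.{u}, ℵ₀ ≤ κ → MonotonicallyKappaMonolithic T κ

/-- `T` is a Collins-Roscoe space. -/
def CollinsRoscoe (T : Type u) [TopologicalSpace T] : Prop :=
  ∃ O : T → Set (Set T), (∀ x, (O x).Countable) ∧
    ∀ A : Set T, IsExternalNetwork T (⋃ x ∈ A, O x) (closure A)

namespace CRAux

open Topology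

lemma finite_subset_mono_iUnion {α : Type*} {T : ℕ → Set α} (hT : Monotone T) {s : Set α}
    (hs : s.Finite) (h : s ⊆ ⋃ n, T n) : ∃ n, s ⊆ T n := by
  classical
  have hex : ∀ x, x ∈ s → ∃ n, x ∈ T n := fun x hx => mem_iUnion.1 (h hx)
  choose f hf using hex
  set g : α → ℕ := fun x => if hx : x ∈ s then f x hx else 0 with hg
  refine ⟨hs.toFinset.sup g, fun x hx => ?_⟩
  have h1 : x ∈ T (g x) := by
    simp only [hg, dif_pos hx]
    exact hf x hx
  exact hT (Finset.le_sup (hs.mem_toFinset.2 hx)) h1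

variable {K : Type u} [TopologicalSpace K] [CompactSpace K] [T2Space K]

open Classical in
/-- canonical Urysohn separator for a pair of sets with disjoint closures -/
noncomputable def sep (P Q : Set K) : K → ℝ :=
  if h : Disjoint (closure P) (closure Q) then
    ⇑(exists_continuous_zero_one_of_isClosed isClosed_closure isClosed_closure h).choose
  else fun _ => 0

lemma sep_continuous (P Q : Set K) : Continuous (sep P Q) := by
  unfold sep
  split
  · exact ContinuousMap.continuous _
  · exact continuous_const

lemma sep_zero {P Q : Set K} (h : Disjoint (closure P) (closure Q)) {x : K}
    (hx : x ∈ closure P) : sep P Q x = 0 := by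
  have hs := (exists_continuous_zero_one_of_isClosed (X := K)
    isClosed_closure isClosed_closure h).choose_spec
  simp only [sep, dif_pos h]
  exact hs.1 hx

lemma sep_one {P Q : Set K} (h : Disjoint (closure P) (closure Q)) {x : K}
    (hx : x ∈ closure Q) : sep P Q x = 1 := by
  have hs := (exists_continuous_zero_one_of_isClosed (X := K)
    isClosed_closure isClosed_closure h).choose_spec
  simp only [sep, dif_pos h]
  exact hs.2.1 hx

/-- approximation property: `E` is a countable subset of `A` whose image under the
evaluation at the functions in `γ` is dense in the corresponding image of `A`. -/
def ApproxSpec (A : Set K) (γ : Set (K → ℝ)) (E : Set K) : Prop :=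
  E ⊆ A ∧ E.Countable ∧ ∀ x ∈ A, ∀ ε : ℝ, 0 < ε → ∃ d ∈ E, ∀ g ∈ γ, |g x - g d| < ε

lemma exists_approx (A : Set K) {γ : Set (K → ℝ)} (hγ : γ.Finite) :
    ∃ E, ApproxSpec A γ E := by
  haveI := hγ.fintype
  set p : K → (↥γ → ℝ) := fun x g => (g : K → ℝ) x with hp
  obtain ⟨t, htc, htd⟩ := TopologicalSpace.exists_countable_dense ↥(p '' A)
  have hpre : ∀ y : ↥(p '' A), ∃ a, a ∈ A ∧ p a = (y : ↥γ → ℝ) := by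
    intro y
    obtain ⟨a, ha, hpa⟩ := y.2
    exact ⟨a, ha, hpa⟩
  choose pre hpreA hpreEq using hpre
  refine ⟨pre '' t, ?_, htc.image _, ?_⟩
  · rintro x ⟨y, _, rfl⟩
    exact hpreA y
  · intro x hx ε hε
    obtain ⟨y, hyt, hyd⟩ := htd.exists_dist_lt (⟨p x, mem_image_of_mem _ hx⟩ : ↥(p '' A)) hε
    refine ⟨pre y, mem_image_of_mem _ hyt, ?_⟩
    intro g hg
    have h2 : dist (p x) (p (pre y)) < ε := by
      rw [Subtype.dist_eq] at hyd
      simpa [hpreEq y] using hyd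
    calc |g x - g (pre y)| = dist (p x ⟨g, hg⟩) (p (pre y) ⟨g, hg⟩) := by
          simp [hp, Real.dist_eq]
      _ ≤ dist (p x) (p (pre y)) := dist_le_pi_dist _ _ _
      _ < ε := h2

open Classical in
noncomputable def approxSet (A : Set K) (γ : Set (K → ℝ)) : Set K :=
  if h : ∃ E, ApproxSpec A γ E then h.choose else ∅

lemma approxSet_spec (A : Set K) {γ : Set (K → ℝ)} (hγ : γ.Finite) :
    ApproxSpec A γ (approxSet A γ) := by
  rw [approxSet, dif_pos (exists_approx A hγ)]
  exact (exists_approx A hγ).choose_spec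

lemma approxSet_subset (A : Set K) (γ : Set (K → ℝ)) : approxSet A γ ⊆ A := by
  rw [approxSet]
  split
  · next h => exact h.choose_spec.1
  · exact empty_subset _

lemma approxSet_countable (A : Set K) (γ : Set (K → ℝ)) : (approxSet A γ).Countable := by
  rw [approxSet]
  split
  · next h => exact h.choose_spec.2.1
  · exact countable_empty

variable (O : K → Set (Set K))

def net (S : Set K) : Set (Set K) := ⋃ x ∈ S, O x

lemma net_mono {S T : Set K} (h : S ⊆ T) : net O S ⊆ net O T :=
  biUnion_subset_biUnion_left h

lemma net_iUnion {ι : Sort*} (S : ι → Set K) : net O (⋃ i, S i) = ⋃ i, net O (S i) := by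
  simp only [net, biUnion_iUnion]

lemma net_countable (hO1 : ∀ x, (O x).Countable) {S : Set K} (hS : S.Countable) :
    (net O S).Countable :=
  hS.biUnion fun x _ => hO1 x

def sepFam (S : Set K) : Set (K → ℝ) :=
  (fun pq : Set K × Set K => sep pq.1 pq.2) ''
    {pq | pq.1 ∈ net O S ∧ pq.2 ∈ net O S ∧ Disjoint (closure pq.1) (closure pq.2)}

lemma sepFam_continuous {S : Set K} {g : K → ℝ} (hg : g ∈ sepFam O S) : Continuous g := by
  obtain ⟨⟨P, Q⟩, _, rfl⟩ := hg
  exact sep_continuous P Q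

lemma sepFam_mono {S T : Set K} (h : S ⊆ T) : sepFam O S ⊆ sepFam O T := by
  apply image_mono
  rintro ⟨P, Q⟩ ⟨h1, h2, h3⟩
  exact ⟨net_mono O h h1, net_mono O h h2, h3⟩

lemma sepFam_countable (hO1 : ∀ x, (O x).Countable) {S : Set K} (hS : S.Countable) :
    (sepFam O S).Countable := by
  apply Set.Countable.image
  have h1 : {pq : Set K × Set K | pq.1 ∈ net O S ∧ pq.2 ∈ net O S ∧
      Disjoint (closure pq.1) (closure pq.2)} ⊆ (net O S) ×ˢ (net O S) := by
    rintro ⟨P, Q⟩ ⟨h1, h2, _⟩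
    exact ⟨h1, h2⟩
  exact ((net_countable O hO1 hS).prod (net_countable O hO1 hS)).mono h1

lemma sepFam_iUnion_nat {S : ℕ → Set K} (hS : Monotone S) :
    sepFam O (⋃ n, S n) = ⋃ n, sepFam O (S n) := by
  apply subset_antisymm
  · rintro g ⟨⟨P, Q⟩, ⟨hP, hQ, hd⟩, rfl⟩
    rw [net_iUnion] at hP hQ
    obtain ⟨i, hPi⟩ := mem_iUnion.1 hP
    obtain ⟨j, hQj⟩ := mem_iUnion.1 hQ
    refine mem_iUnion.2 ⟨max i j, ⟨(P, Q), ⟨?_, ?_, hd⟩, rfl⟩⟩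
    · exact net_mono O (hS (le_max_left i j)) hPi
    · exact net_mono O (hS (le_max_right i j)) hQj
  · exact iUnion_subset fun n => sepFam_mono O (subset_iUnion S n)

def finSub (s : Set (K → ℝ)) : Set (Set (K → ℝ)) := {γ | γ.Finite ∧ γ ⊆ s}

lemma finSub_countable {s : Set (K → ℝ)} (hs : s.Countable) : (finSub s).Countable :=
  Set.countable_setOf_finite_subset hs

noncomputable def DD (F : Set (Set K)) : ℕ → Set K
  | 0 => ∅
  | n + 1 => DD F n ∪
      ⋃ A ∈ insert Set.univ F, ⋃ γ ∈ finSub (sepFam O (DD F n)), approxSet A γ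

lemma DD_zero (F : Set (Set K)) : DD O F 0 = ∅ := rfl

lemma DD_succ (F : Set (Set K)) (n : ℕ) : DD O F (n + 1) = DD O F n ∪
    ⋃ A ∈ insert Set.univ F, ⋃ γ ∈ finSub (sepFam O (DD O F n)), approxSet A γ := rfl

lemma DD_le_succ (F : Set (Set K)) (n : ℕ) : DD O F n ⊆ DD O F (n + 1) := by
  rw [DD_succ]; exact subset_union_left

lemma DD_mono_nat (F : Set (Set K)) : Monotone (DD O F) :=
  monotone_nat_of_le_succ (DD_le_succ O F)

lemma DD_mono_F {F G : Set (Set K)} (h : F ⊆ G) : ∀ n, DD O F n ⊆ DD O G n := by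
  intro n
  induction n with
  | zero => rw [DD_zero]; exact empty_subset _
  | succ n ih =>
    rw [DD_succ, DD_succ]
    apply union_subset_union ih
    intro z hz
    obtain ⟨A, hA, hz⟩ := mem_iUnion₂.1 hz
    obtain ⟨γ, ⟨h1, h2⟩, hz⟩ := mem_iUnion₂.1 hz
    exact mem_biUnion (insert_subset_insert h hA)
      (mem_biUnion ⟨h1, h2.trans (sepFam_mono O ih)⟩ hz)

lemma DD_countable (hO1 : ∀ x, (O x).Countable) {F : Set (Set K)} (hF : F.Countable) :
    ∀ n, (DD O F n).Countable := by
  intro n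
  induction n with
  | zero => rw [DD_zero]; exact countable_empty
  | succ n ih =>
    rw [DD_succ]
    refine ih.union ((hF.insert Set.univ).biUnion fun A _ => ?_)
    exact (finSub_countable (sepFam_countable O hO1 ih)).biUnion
      fun γ _ => approxSet_countable A γ

noncomputable def Dset (F : Set (Set K)) : Set K := ⋃ n, DD O F n

lemma Dset_countable (hO1 : ∀ x, (O x).Countable) {F : Set (Set K)} (hF : F.Countable) :
    (Dset O F).Countable :=
  countable_iUnion fun n => DD_countable O hO1 hF n

lemma Dset_mono {F G : Set (Set K)} (h : F ⊆ G) : Dset O F ⊆ Dset O G :=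
  iUnion_mono fun n => DD_mono_F O h n

lemma DD_iUnion (s : ℕ → Set (Set K)) (hs : ∀ n, s n ⊆ s (n + 1)) :
    ∀ n, DD O (⋃ k, s k) n = ⋃ k, DD O (s k) n := by
  have hsm : Monotone s := monotone_nat_of_le_succ hs
  intro n
  induction n with
  | zero => simp [DD_zero]
  | succ n ih =>
    apply subset_antisymm
    · intro z hz
      rw [DD_succ] at hz
      rcases hz with hz | hz
      · rw [ih] at hz
        obtain ⟨k, hk⟩ := mem_iUnion.1 hz
        exact mem_iUnion.2 ⟨k, DD_le_succ O (s k) n hk⟩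
      · obtain ⟨A, hA, hz⟩ := mem_iUnion₂.1 hz
        obtain ⟨γ, ⟨hγfin, hγsub⟩, hz⟩ := mem_iUnion₂.1 hz
        rw [ih] at hγsub
        have hmono2 : Monotone fun k => DD O (s k) n := fun i j hij => DD_mono_F O (hsm hij) n
        rw [sepFam_iUnion_nat O hmono2] at hγsub
        obtain ⟨k1, hk1⟩ := finite_subset_mono_iUnion
          (fun i j hij => sepFam_mono O (hmono2 hij)) hγfin hγsub
        have hA' : ∃ k0, A ∈ insert Set.univ (s k0) := by
          rcases hA with rfl | hA
          · exact ⟨0, mem_insert _ _⟩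
          · obtain ⟨k0, hk0⟩ := mem_iUnion.1 hA
            exact ⟨k0, mem_insert_of_mem _ hk0⟩
        obtain ⟨k0, hk0⟩ := hA'
        refine mem_iUnion.2 ⟨max k0 k1, ?_⟩
        rw [DD_succ]
        refine Or.inr (mem_biUnion ?_ (mem_biUnion (⟨hγfin, ?_⟩ :
          γ ∈ finSub (sepFam O (DD O (s (max k0 k1)) n))) hz))
        · rcases hk0 with rfl | hk0
          · exact mem_insert _ _
          · exact mem_insert_of_mem _ (hsm (le_max_left k0 k1) hk0)
        · exact hk1.trans (sepFam_mono O (DD_mono_F O (hsm (le_max_right k0 k1)) n))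
    · refine iUnion_subset fun k => ?_
      exact DD_mono_F O (subset_iUnion s k) (n + 1)

lemma Dset_iUnion (s : ℕ → Set (Set K)) (hs : ∀ n, s n ⊆ s (n + 1)) :
    Dset O (⋃ k, s k) = ⋃ k, Dset O (s k) := by
  unfold Dset
  rw [iUnion_comm]
  exact iUnion_congr fun n => DD_iUnion O s hs n

lemma main (hO1 : ∀ x, (O x).Countable)
    (hO2 : ∀ A : Set K, IsExternalNetwork K (⋃ x ∈ A, O x) (closure A))
    (F : Set (Set K)) :
    ∃ r : K → K, Continuous r ∧ (∀ x, r (r x) = r x) ∧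
      (∀ A ∈ F, IsClosed A → ∀ x ∈ A, r x ∈ A) ∧
      range r ⊆ closure (Dset O F) := by
  classical
  set D : Set K := Dset O F with hD
  set Y : Set K := closure D with hYdef
  set G : Set (K → ℝ) := sepFam O D with hGdef
  set q : K → (↥G → ℝ) := fun x g => (g : K → ℝ) x with hqdef
  have hqc : Continuous q := continuous_pi fun g => sepFam_continuous O g.2
  -- every finite subfamily of `G` appears at a finite stage
  have hGstage : ∀ γ : Set (K → ℝ), γ.Finite → γ ⊆ G → ∃ n, γ ⊆ sepFam O (DD O F n) := by
    intro γ hfin hsub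
    have h1 : γ ⊆ ⋃ n, sepFam O (DD O F n) := by
      rw [← sepFam_iUnion_nat O (DD_mono_nat O F)]
      exact hsub
    exact finite_subset_mono_iUnion
      (fun i j hij => sepFam_mono O (DD_mono_nat O F hij)) hfin h1
  -- Step A: approximation
  have stepA : ∀ A ∈ insert Set.univ F, ∀ x ∈ A, q x ∈ closure (q '' (D ∩ A)) := by
    intro A hA x hx
    rw [mem_closure_iff]
    intro o ho hxo
    obtain ⟨I, u, hu, hsubo⟩ := isOpen_pi_iff.1 ho (q x) hxo
    have heps : ∀ i : ↥G, ∃ ε : ℝ, 0 < ε ∧ (i ∈ I → Metric.ball (q x i) ε ⊆ u i) := by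
      intro i
      by_cases hi : i ∈ I
      · obtain ⟨ε, hε, hb⟩ := Metric.isOpen_iff.1 (hu i hi).1 _ (hu i hi).2
        exact ⟨ε, hε, fun _ => hb⟩
      · exact ⟨1, one_pos, fun hh => absurd hh hi⟩
    choose εf hεf using heps
    set T : Finset ℝ := insert 1 (I.image εf) with hT
    have hTne : T.Nonempty := ⟨1, Finset.mem_insert_self _ _⟩
    set ε : ℝ := T.min' hTne with hεdef
    have hεpos : 0 < ε := by
      have hmem := T.min'_mem hTne
      rw [← hεdef] at hmem
      rcases Finset.mem_insert.1 hmem with hh | hh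
      · rw [hh]; exact one_pos
      · obtain ⟨i, _, hie⟩ := Finset.mem_image.1 hh
        rw [← hie]
        exact (hεf i).1
    have hεle : ∀ i ∈ I, ε ≤ εf i := fun i hi =>
      Finset.min'_le _ _ (Finset.mem_insert_of_mem (Finset.mem_image_of_mem _ hi))
    set γ : Set (K → ℝ) := Subtype.val '' (↑I : Set ↥G) with hγdef
    have hγfin : γ.Finite := I.finite_toSet.image _
    have hγG : γ ⊆ G := by
      rintro g ⟨i, _, rfl⟩
      exact i.2
    obtain ⟨n, hn⟩ := hGstage γ hγfin hγG
    obtain ⟨d, hdE, hdapp⟩ := (approxSet_spec A hγfin).2.2 x hx ε hεpos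
    have hdD : d ∈ D := by
      have h1 : approxSet A γ ⊆ DD O F (n + 1) := by
        intro z hz
        rw [DD_succ]
        exact Or.inr (mem_biUnion hA (mem_biUnion (⟨hγfin, hn⟩ :
          γ ∈ finSub (sepFam O (DD O F n))) hz))
      exact mem_iUnion.2 ⟨n + 1, h1 hdE⟩
    refine ⟨q d, hsubo ?_, mem_image_of_mem _ ⟨hdD, approxSet_subset A γ hdE⟩⟩
    rw [Set.mem_pi]
    intro i hi
    have hgγ : (i : K → ℝ) ∈ γ := ⟨i, hi, rfl⟩
    refine (hεf i).2 hi ?_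
    rw [Metric.mem_ball, Real.dist_eq]
    have h2 : |(i : K → ℝ) x - (i : K → ℝ) d| < ε := hdapp _ hgγ
    have h3 : |q d i - q x i| = |(i : K → ℝ) x - (i : K → ℝ) d| := by
      rw [abs_sub_comm]
    rw [h3]
    exact lt_of_lt_of_le h2 (hεle i hi)
  -- Step B: injectivity on Y
  have stepB : InjOn q Y := by
    intro y hy y' hy' hqe
    by_contra hne
    obtain ⟨U, V, hU, hV, hyU, hyV, hUV⟩ := t2_separation hne
    obtain ⟨CU, hCUn, hCUc, hCUs⟩ := exists_mem_nhds_isClosed_subset (hU.mem_nhds hyU)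
    obtain ⟨CV, hCVn, hCVc, hCVs⟩ := exists_mem_nhds_isClosed_subset (hV.mem_nhds hyV)
    obtain ⟨P, hPmem, hyP, hPsub⟩ := hO2 D y hy (interior CU) isOpen_interior
      (mem_interior_iff_mem_nhds.2 hCUn)
    obtain ⟨Q, hQmem, hyQ, hQsub⟩ := hO2 D y' hy' (interior CV) isOpen_interior
      (mem_interior_iff_mem_nhds.2 hCVn)
    have hPc : closure P ⊆ U :=
      (closure_mono hPsub).trans ((closure_minimal interior_subset hCUc).trans hCUs)
    have hQc : closure Q ⊆ V :=
      (closure_mono hQsub).trans ((closure_minimal interior_subset hCVc).trans hCVs)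
    have hdis : Disjoint (closure P) (closure Q) := hUV.mono hPc hQc
    have hgG : sep P Q ∈ G := ⟨(P, Q), ⟨hPmem, hQmem, hdis⟩, rfl⟩
    have h0 : q y ⟨sep P Q, hgG⟩ = 0 := sep_zero hdis (subset_closure hyP)
    have h1 : q y' ⟨sep P Q, hgG⟩ = 1 := sep_one hdis (subset_closure hyQ)
    rw [hqe] at h0
    rw [h0] at h1
    exact zero_ne_one h1
  have hYc : IsCompact Y := isClosed_closure.isCompact
  have hDY : D ⊆ Y := subset_closure
  -- key existence of representatives
  have key : ∀ A ∈ insert Set.univ F, IsClosed A → ∀ x ∈ A, ∃ y ∈ Y ∩ A, q y = q x := by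
    intro A hA hAc x hx
    have h1 := stepA A hA x hx
    have h2 : IsCompact (q '' (Y ∩ A)) := ((hYc.inter_right hAc).image hqc)
    have h3 : closure (q '' (D ∩ A)) ⊆ q '' (Y ∩ A) :=
      closure_minimal (image_mono (f := q) (inter_subset_inter hDY (subset_refl A))) h2.isClosed
    exact h3 h1
  have hex : ∀ x : K, ∃ y, y ∈ Y ∧ q y = q x := by
    intro x
    obtain ⟨y, hy, hqy⟩ := key Set.univ (mem_insert _ _) isClosed_univ x (mem_univ x)
    exact ⟨y, hy.1, hqy⟩
  choose r hrY hrq using hex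
  have huniq : ∀ x, ∀ y ∈ Y, q y = q x → r x = y := fun x y hy hqy =>
    stepB (hrY x) hy (by rw [hrq x, hqy])
  refine ⟨r, ?_, fun x => huniq (r x) (r x) (hrY x) rfl, ?_, ?_⟩
  · haveI : CompactSpace ↥Y := isCompact_iff_compactSpace.1 hYc
    set e : ↥Y → (↥G → ℝ) := fun y => q y with he
    have hec : Continuous e := hqc.comp continuous_subtype_val
    have hei : Function.Injective e := fun a b hab => Subtype.ext (stepB a.2 b.2 hab)
    have hemb : IsEmbedding e := (hec.isClosedEmbedding hei).toIsEmbedding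
    have hcont : Continuous fun x => (⟨r x, hrY x⟩ : ↥Y) := by
      rw [hemb.continuous_iff]
      have heq : (e ∘ fun x => (⟨r x, hrY x⟩ : ↥Y)) = q := by
        funext x
        exact hrq x
      rw [heq]
      exact hqc
    exact continuous_subtype_val.comp hcont
  · intro A hA hAc x hx
    obtain ⟨y, hy, hqy⟩ := key A (mem_insert_of_mem _ hA) hAc x hx
    rw [huniq x y hy.1 hqy]
    exact hy.2
  · rintro z ⟨x, rfl⟩
    exact hrY x

end CRAux


theorem monotonicallySokolov_of_compact_collinsRoscoe
    (K : Type u) [TopologicalSpace K] [CompactSpace K] [T2Space K]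
    (h : CollinsRoscoe K) : MonotonicallySokolov K := by
  obtain ⟨O, hO1, hO2⟩ := h
  refine ⟨fun F => (CRAux.main O hO1 hO2 F).choose,
    fun F => CRAux.net O (CRAux.Dset O F), ?_, ?_, ?_⟩
  · intro F hFc hFcl
    obtain ⟨hc, hid, hinv, hran⟩ := (CRAux.main O hO1 hO2 F).choose_spec
    refine ⟨hc, hid, fun A hA x hx => hinv A hA (hFcl A hA) x hx,
      CRAux.net_countable O hO1 (CRAux.Dset_countable O hO1 hFc), ?_⟩
    intro a ha U hU haU
    exact hO2 (CRAux.Dset O F) a (hran ha) U hU haU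
  · intro F G _ _ _ _ hFG
    exact CRAux.net_mono O (CRAux.Dset_mono O hFG)
  · intro s _ _ hmono
    show CRAux.net O (CRAux.Dset O (⋃ n, s n)) = ⋃ n, CRAux.net O (CRAux.Dset O (s n))
    rw [CRAux.Dset_iUnion O s hmono, CRAux.net_iUnion]
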